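/- For nonnegative integer l and indices 0 ≤ l_1 < ⋯ < l_m ≤ b+m−1 with ordered complement ĥ_1 < ⋯ < ĥ_b in {0,…,b+m−1}: ∏_{1≤i<j≤b}(q^{ĥ_j} − q^{ĥ_i}) = (−1)^{C(b,2)+C(m,2)} q^{C(b+m,3)+(2−b−m)|l|+∑_j C(l_j,2)} · [∏_{j=1}^{b+m}(q;q)_{j-1} / ∏_{j=1}^m (q;q)_{l_j}(q;q)_{b+m-1-l_j}] · ∏_{1≤i<j≤m}(q^{l_j}−q^{l_i}). -/

import Mathlib

open Finset

/-- q-Pochhammer symbol `(x;q)_n = ∏_{j=0}^{n-1} (1 - x q^j)`. -/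
def qPoch {K : Type*} [Field K] (q x : K) (n : ℕ) : K :=
  ∏ j ∈ Finset.range n, (1 - x * q ^ j)

namespace CV
variable {K : Type*} [Field K] (q : K)

def Dn (s : Finset ℕ) : K := ∏ a ∈ s, ∏ c ∈ s.filter (· < a), (q ^ a - q ^ c)

def fac (a c : ℕ) : K := q ^ max a c - q ^ min a c

lemma fac_comm (a c : ℕ) : fac q a c = fac q c a := by
  simp [fac, max_comm, min_comm]

def Mx (s t : Finset ℕ) : K := ∏ a ∈ s, ∏ c ∈ t, fac q a c

lemma two_mul_choose_two (k : ℕ) : 2 * k.choose 2 = k * (k - 1) := by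
  rw [Nat.choose_two_right, Nat.mul_div_cancel']
  cases k with
  | zero => simp
  | succ j =>
    simpa [Nat.mul_comm] using (Nat.even_mul_succ_self j).two_dvd

lemma int_choose_two (k : ℕ) : (k.choose 2 : ℤ) * 2 = k * (k - 1) := by
  have h : (k.choose 2 : ℤ) * 2 = ((2 * k.choose 2 : ℕ) : ℤ) := by push_cast; ring
  rw [h, two_mul_choose_two]
  cases k with
  | zero => simp
  | succ j => push_cast; ring

lemma sum_range_id_eq (a : ℕ) : ∑ i ∈ range a, i = a.choose 2 := by
  have h := Finset.sum_range_id_mul_two a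
  have := two_mul_choose_two a
  omega

lemma choose_two_add (b m : ℕ) : (b + m).choose 2 = b.choose 2 + m.choose 2 + b * m := by
  have i1 := int_choose_two (b + m)
  have i2 := int_choose_two b
  have i3 := int_choose_two m
  have key : ((b+m).choose 2 : ℤ) * 2 = ((b.choose 2 : ℤ) + m.choose 2 + b*m) * 2 := by
    push_cast at i1 ⊢
    linear_combination i1 - i2 - i3
  have key2 : ((b+m).choose 2 : ℤ) = (b.choose 2 : ℤ) + m.choose 2 + b*m :=
    mul_right_cancel₀ two_ne_zero key
  exact_mod_cast key2

lemma qPoch_ne_zero (hq : ∀ n : ℕ, 0 < n → q ^ n ≠ 1) (k : ℕ) : qPoch q q k ≠ 0 := by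
  rw [qPoch]
  refine Finset.prod_ne_zero_iff.2 fun j _ => ?_
  have : q * q ^ j = q ^ (j + 1) := (pow_succ' q j).symm
  rw [this, sub_ne_zero]
  exact fun h => hq (j+1) (Nat.succ_pos j) h.symm

lemma prod_neg_one_sub (k : ℕ) :
    ∏ j ∈ range k, (q ^ (j+1) - 1) = (-1) ^ k * qPoch q q k := by
  rw [qPoch]
  have : ∀ j ∈ range k, q ^ (j+1) - 1 = (-1) * (1 - q * q ^ j) := by
    intro j _; rw [pow_succ']; ring
  rw [Finset.prod_congr rfl this, Finset.prod_mul_distrib, Finset.prod_const, card_range]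

lemma prod_lower (a : ℕ) :
    ∏ c ∈ range a, (q ^ a - q ^ c) = (-1) ^ a * q ^ a.choose 2 * qPoch q q a := by
  have h1 : ∀ c ∈ range a, q ^ a - q ^ c = q ^ c * (q ^ (a - c) - 1) := by
    intro c hc
    rw [mem_range] at hc
    rw [mul_sub, mul_one, ← pow_add]
    congr 2
    omega
  rw [Finset.prod_congr rfl h1, Finset.prod_mul_distrib, Finset.prod_pow_eq_pow_sum,
    sum_range_id_eq]
  have h2 : ∏ c ∈ range a, (q ^ (a - c) - 1) = ∏ j ∈ range a, (q ^ (j + 1) - 1) := by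
    have hr := Finset.prod_range_reflect (fun j => q ^ (a - j) - 1) a
    rw [← hr]
    refine Finset.prod_congr rfl fun c hc => ?_
    rw [mem_range] at hc
    congr 2
    omega
  rw [h2, prod_neg_one_sub]
  ring

lemma prod_upper {a n : ℕ} (ha : a < n) :
    ∏ c ∈ Ico (a+1) n, (q ^ c - q ^ a) =
      (-1) ^ (n - 1 - a) * q ^ (a * (n - 1 - a)) * qPoch q q (n - 1 - a) := by
  rw [Finset.prod_Ico_eq_prod_range]
  have hn : n - (a + 1) = n - 1 - a := by omega
  rw [hn]
  have h1 : ∀ t ∈ range (n - 1 - a), q ^ (a + 1 + t) - q ^ a = q ^ a * (q ^ (t+1) - 1) := by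
    intro t _
    rw [mul_sub, mul_one, ← pow_add]
    congr 2
    omega
  rw [Finset.prod_congr rfl h1, Finset.prod_mul_distrib, Finset.prod_const, card_range,
    prod_neg_one_sub, ← pow_mul]
  ring

lemma fac_of_lt {a c : ℕ} (h : c < a) : fac q a c = q ^ a - q ^ c := by
  simp [fac, max_eq_left h.le, min_eq_right h.le]

lemma fac_of_gt {a c : ℕ} (h : a < c) : fac q a c = q ^ c - q ^ a := by
  simp [fac, max_eq_right h.le, min_eq_left h.le]

lemma prod_fac_split {x : ℕ} {s : Finset ℕ} (hx : x ∉ s) :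
    ∏ a ∈ s, fac q x a =
      (∏ c ∈ s.filter (· < x), (q ^ x - q ^ c)) *
        ∏ c ∈ s.filter (x < ·), (q ^ c - q ^ x) := by
  rw [← Finset.prod_filter_mul_prod_filter_not s (· < x)]
  congr 1
  · exact Finset.prod_congr rfl fun c hc => fac_of_lt q (mem_filter.1 hc).2
  · refine Finset.prod_congr ?_ fun c hc => fac_of_gt q (mem_filter.1 hc).2
    refine Finset.filter_congr fun c hc => ?_
    have : c ≠ x := fun h => hx (h ▸ hc)
    simp only [not_lt]
    exact ⟨fun h => lt_of_le_of_ne h (Ne.symm this), fun h => h.le⟩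

lemma Dn_insert {x : ℕ} {s : Finset ℕ} (hx : x ∉ s) :
    Dn q (insert x s) = (∏ a ∈ s, fac q x a) * Dn q s := by
  rw [Dn, Finset.prod_insert hx]
  have hfx : (insert x s).filter (· < x) = s.filter (· < x) := by
    rw [Finset.filter_insert, if_neg (lt_irrefl x)]
  have hfa : ∀ a ∈ s, ∏ c ∈ (insert x s).filter (· < a), (q ^ a - q ^ c) =
      (if x < a then q ^ a - q ^ x else 1) * ∏ c ∈ s.filter (· < a), (q ^ a - q ^ c) := by
    intro a ha
    rw [Finset.filter_insert]
    by_cases h : x < a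
    · rw [if_pos h, if_pos h, Finset.prod_insert (by simp [hx])]
    · rw [if_neg h, if_neg h, one_mul]
  rw [hfx, Finset.prod_congr rfl hfa, Finset.prod_mul_distrib, ← Finset.prod_filter,
    prod_fac_split q hx, Dn]
  ring


lemma Dn_union {s t : Finset ℕ} (h : Disjoint s t) :
    Dn q (s ∪ t) = Dn q s * Dn q t * Mx q s t := by
  classical
  induction t using Finset.induction_on with
  | empty => simp [Mx, Dn]
  | @insert x t hxt ih =>
    have hd : Disjoint s t := h.mono_right (Finset.subset_insert x t)
    have hxs : x ∉ s := Finset.disjoint_right.1 h (Finset.mem_insert_self x t)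
    have hxu : x ∉ s ∪ t := by simp [hxs, hxt]
    have hMx : Mx q s (insert x t) = (∏ a ∈ s, fac q x a) * Mx q s t := by
      rw [Mx, Mx, ← Finset.prod_mul_distrib]
      refine Finset.prod_congr rfl fun a _ => ?_
      rw [Finset.prod_insert hxt, fac_comm]
    rw [Finset.union_insert, Dn_insert q hxu, Dn_insert q hxt, ih hd, Finset.prod_union hd, hMx]
    ring

lemma erase_split {s : Finset ℕ} {a : ℕ} :
    s.erase a = s.filter (· < a) ∪ s.filter (a < ·) := by
  ext c
  simp only [Finset.mem_erase, Finset.mem_union, Finset.mem_filter]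
  by_cases hcs : c ∈ s <;> simp [hcs]

lemma prod_erase_sq (s : Finset ℕ) :
    ∏ a ∈ s, ∏ c ∈ s.erase a, fac q a c = Dn q s ^ 2 := by
  have h : ∀ a ∈ s, ∏ c ∈ s.erase a, fac q a c =
      (∏ c ∈ s.filter (· < a), (q ^ a - q ^ c)) *
        ∏ c ∈ s.filter (a < ·), (q ^ c - q ^ a) := by
    intro a _
    rw [erase_split, Finset.prod_union]
    · congr 1
      · exact Finset.prod_congr rfl fun c hc => fac_of_lt q (mem_filter.1 hc).2
      · exact Finset.prod_congr rfl fun c hc => fac_of_gt q (mem_filter.1 hc).2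
    · rw [Finset.disjoint_left]
      intro c hc1 hc2
      exact absurd (mem_filter.1 hc2).2 (not_lt.2 (mem_filter.1 hc1).2.le)
  rw [Finset.prod_congr rfl h, Finset.prod_mul_distrib, sq, Dn]
  congr 1
  exact Finset.prod_comm' fun x y => by
    simp only [Finset.mem_filter]
    tauto

lemma prod_erase_range {a n : ℕ} (ha : a < n) :
    ∏ c ∈ (range n).erase a, fac q a c =
      (-1) ^ (n - 1) * q ^ (a.choose 2 + a * (n - 1 - a)) *
        (qPoch q q a * qPoch q q (n - 1 - a)) := by
  have hsplit : (range n).erase a = range a ∪ Ico (a+1) n := by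
    ext c
    simp only [Finset.mem_erase, Finset.mem_range, Finset.mem_union, Finset.mem_Ico]
    omega
  have hdisj : Disjoint (range a) (Ico (a+1) n) := by
    rw [Finset.disjoint_left]
    intro c hc1 hc2
    rw [mem_range] at hc1
    rw [mem_Ico] at hc2
    omega
  rw [hsplit, Finset.prod_union hdisj]
  have h1 : ∏ c ∈ range a, fac q a c = ∏ c ∈ range a, (q ^ a - q ^ c) :=
    Finset.prod_congr rfl fun c hc => fac_of_lt q (mem_range.1 hc)
  have h2 : ∏ c ∈ Ico (a+1) n, fac q a c = ∏ c ∈ Ico (a+1) n, (q ^ c - q ^ a) :=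
    Finset.prod_congr rfl fun c hc => fac_of_gt q (mem_Ico.1 hc).1
  rw [h1, h2, prod_lower, prod_upper q ha, pow_add]
  have hexp : (-1 : K) ^ a * (-1 : K) ^ (n - 1 - a) = (-1) ^ (n - 1) := by
    rw [← pow_add]
    congr 1
    omega
  rw [← hexp]
  ring

lemma Dn_range (n : ℕ) :
    Dn q (range n) = (-1) ^ n.choose 2 * q ^ n.choose 3 * ∏ j ∈ range n, qPoch q q j := by
  induction n with
  | zero => simp [Dn]
  | succ n ih =>
    have hx : n ∉ range n := by simp
    rw [Finset.range_add_one, Dn_insert q hx, ih]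
    have h1 : ∏ a ∈ range n, fac q n a = ∏ c ∈ range n, (q ^ n - q ^ c) :=
      Finset.prod_congr rfl fun c hc => fac_of_lt q (mem_range.1 hc)
    rw [h1, prod_lower, Finset.prod_insert hx]
    have hc2 : (n+1).choose 2 = n + n.choose 2 := by
      rw [Nat.choose_succ_succ, Nat.choose_one_right]
    have hc3 : (n+1).choose 3 = n.choose 2 + n.choose 3 := by
      rw [Nat.choose_succ_succ]
    rw [hc2, hc3, pow_add, pow_add]
    ring

lemma prod_pairs {k : ℕ} (g : Fin k → ℕ) :
    ∏ p ∈ Finset.univ.filter (fun p : Fin k × Fin k => p.1 < p.2),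
        (q ^ g p.2 - q ^ g p.1) =
      ∏ j : Fin k, ∏ i ∈ Finset.univ.filter (· < j), (q ^ g j - q ^ g i) := by
  rw [Finset.prod_filter, ← Finset.univ_product_univ, Finset.prod_product_right]
  refine Finset.prod_congr rfl fun j _ => ?_
  rw [Finset.prod_filter]

lemma Dn_image {k : ℕ} (g : Fin k → ℕ) (hg : StrictMono g) :
    Dn q (Finset.image g Finset.univ) =
      ∏ j : Fin k, ∏ i ∈ Finset.univ.filter (· < j), (q ^ g j - q ^ g i) := by
  rw [Dn, Finset.prod_image (fun i _ j _ h => hg.injective h)]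
  refine Finset.prod_congr rfl fun j _ => ?_
  have hset : (Finset.image g Finset.univ).filter (· < g j) =
      Finset.image g (Finset.univ.filter (· < j)) := by
    ext x
    simp only [Finset.mem_filter, Finset.mem_image, Finset.mem_univ, true_and]
    constructor
    · rintro ⟨⟨i, rfl⟩, hlt⟩
      exact ⟨i, hg.lt_iff_lt.1 hlt, rfl⟩
    · rintro ⟨i, hlt, rfl⟩
      exact ⟨⟨i, rfl⟩, hg hlt⟩
  rw [hset, Finset.prod_image (fun i _ j _ h => hg.injective h)]

lemma pair_prod_eq {k : ℕ} (g : Fin k → ℕ) (hg : StrictMono g) :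
    ∏ p ∈ Finset.univ.filter (fun p : Fin k × Fin k => p.1 < p.2),
        (q ^ g p.2 - q ^ g p.1) = Dn q (Finset.image g Finset.univ) := by
  rw [prod_pairs, Dn_image q g hg]

lemma key_eq {n : ℕ} {S T : Finset ℕ} (hd : Disjoint S T) (hu : S ∪ T = range n) :
    Dn q T * ∏ a ∈ S, ∏ c ∈ (range n).erase a, fac q a c = Dn q (range n) * Dn q S := by
  have h2 : ∀ a ∈ S, ∏ c ∈ (range n).erase a, fac q a c =
      (∏ c ∈ S.erase a, fac q a c) * ∏ c ∈ T, fac q a c := by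
    intro a ha
    rw [← hu, Finset.erase_union_distrib,
      Finset.erase_eq_of_notMem (Finset.disjoint_left.1 hd ha),
      Finset.prod_union (Finset.disjoint_of_subset_left (Finset.erase_subset a S) hd)]
  rw [Finset.prod_congr rfl h2, Finset.prod_mul_distrib, prod_erase_sq, ← hu,
    Dn_union q hd, Mx]
  ring

lemma sign_eq (b m : ℕ) :
    ((-1 : K) ^ ((b + m).choose 2)) * (-1) ^ ((b + m - 1) * m) =
      (-1) ^ (b.choose 2 + m.choose 2) := by
  obtain ⟨k, hk⟩ : ∃ k, b * m + (b + m - 1) * m = 2 * k := by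
    cases m with
    | zero => exact ⟨0, by simp⟩
    | succ m' =>
      have h := Nat.even_mul_succ_self m'
      rw [Nat.even_iff] at h
      have expand : (b + (m'+1) - 1) * (m'+1) = b * (m'+1) + m' * (m'+1) := by
        have : b + (m'+1) - 1 = b + m' := by omega
        rw [this]; ring
      exact ⟨(b * (m'+1) + (b + (m'+1) - 1) * (m'+1)) / 2, by omega⟩
  have hk2 : (b + m).choose 2 + (b + m - 1) * m = b.choose 2 + m.choose 2 + 2 * k := by
    have := choose_two_add b m
    omega
  rw [← pow_add, hk2, pow_add, pow_mul, neg_one_sq, one_pow, mul_one]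
end CV

/-- Complementary-minor Vandermonde identity: if `l̂_1 < ⋯ < l̂_b` is the ordered
complement of `l_1 < ⋯ < l_m` in `{0,…,b+m-1}`, then
`∏_{i<j}(q^{l̂_j} − q^{l̂_i}) = (−1)^{C(b,2)+C(m,2)}
 q^{C(b+m,3)+(2−b−m)|l|+∑_j C(l_j,2)}
 [∏_{j=1}^{b+m}(q;q)_{j-1} / ∏_{j=1}^m (q;q)_{l_j}(q;q)_{b+m-1-l_j}]
 ∏_{i<j}(q^{l_j}−q^{l_i})`. -/
theorem complement_vandermonde {K : Type*} [Field K] (b m : ℕ) (q : K)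
    (hq0 : q ≠ 0) (hq : ∀ n : ℕ, 0 < n → q ^ n ≠ 1)
    (l : Fin m → ℕ) (lhat : Fin b → ℕ)
    (hl : StrictMono l) (hlhat : StrictMono lhat)
    (hcomp : Finset.image lhat Finset.univ =
      Finset.range (b + m) \ Finset.image l Finset.univ)
    (hlb : ∀ j, l j < b + m) :
    ∏ p ∈ Finset.univ.filter (fun p : Fin b × Fin b => p.1 < p.2),
        (q ^ lhat p.2 - q ^ lhat p.1) =
      (-1 : K) ^ (Nat.choose b 2 + Nat.choose m 2) *
        q ^ ((Nat.choose (b + m) 3 : ℤ) +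
              (2 - (b : ℤ) - (m : ℤ)) * (∑ j : Fin m, (l j : ℤ)) +
              ∑ j : Fin m, (Nat.choose (l j) 2 : ℤ)) *
        ((∏ j ∈ Finset.range (b + m), qPoch q q j) /
          ∏ j : Fin m, (qPoch q q (l j) * qPoch q q (b + m - 1 - l j))) *
        ∏ p ∈ Finset.univ.filter (fun p : Fin m × Fin m => p.1 < p.2),
          (q ^ l p.2 - q ^ l p.1) := by
  classical
  set S : Finset ℕ := Finset.image l Finset.univ with hS
  set T : Finset ℕ := Finset.image lhat Finset.univ with hT
  have hSsub : S ⊆ Finset.range (b + m) := by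
    intro x hx
    obtain ⟨j, _, rfl⟩ := Finset.mem_image.1 hx
    exact Finset.mem_range.2 (hlb j)
  have hd : Disjoint S T := by
    rw [hcomp]
    exact Finset.disjoint_sdiff
  have hu : S ∪ T = Finset.range (b + m) := by
    rw [hcomp, Finset.union_sdiff_of_subset hSsub]
  -- abbreviations
  set E : ℕ := ∑ j : Fin m, ((l j).choose 2 + l j * (b + m - 1 - l j)) with hE
  set DenP : K := ∏ j : Fin m, (qPoch q q (l j) * qPoch q q (b + m - 1 - l j)) with hDen
  set PQ : K := ∏ j ∈ Finset.range (b + m), qPoch q q j with hPQ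
  -- the product of perforated rows
  have hP : ∏ a ∈ S, ∏ c ∈ (Finset.range (b + m)).erase a, CV.fac q a c =
      (-1 : K) ^ ((b + m - 1) * m) * q ^ E * DenP := by
    rw [hS, Finset.prod_image (fun i _ j _ h => hl.injective h)]
    have h1 : ∀ j ∈ (Finset.univ : Finset (Fin m)),
        ∏ c ∈ (Finset.range (b + m)).erase (l j), CV.fac q (l j) c =
        (-1 : K) ^ (b + m - 1) * q ^ ((l j).choose 2 + l j * (b + m - 1 - l j)) *
          (qPoch q q (l j) * qPoch q q (b + m - 1 - l j)) := fun j _ =>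
      CV.prod_erase_range q (hlb j)
    rw [Finset.prod_congr rfl h1, Finset.prod_mul_distrib, Finset.prod_mul_distrib,
      Finset.prod_const, Finset.prod_pow_eq_pow_sum, Finset.card_univ, Fintype.card_fin,
      ← pow_mul, hE, hDen]
  have hkey := CV.key_eq q hd hu
  rw [hP, CV.Dn_range] at hkey
  -- nonvanishing
  have hqP := CV.qPoch_ne_zero q hq
  have hDen0 : DenP ≠ 0 := by
    rw [hDen]
    exact Finset.prod_ne_zero_iff.2 fun j _ => mul_ne_zero (hqP _) (hqP _)
  have hqE : q ^ E ≠ 0 := pow_ne_zero _ hq0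
  have hs2 : ((-1 : K) ^ ((b + m - 1) * m)) ≠ 0 := pow_ne_zero _ (by norm_num)
  -- exponent identity
  have hZE : ((Nat.choose (b + m) 3 : ℤ) +
        (2 - (b : ℤ) - (m : ℤ)) * (∑ j : Fin m, (l j : ℤ)) +
        ∑ j : Fin m, (Nat.choose (l j) 2 : ℤ)) + (E : ℤ) = (Nat.choose (b + m) 3 : ℤ) := by
    have hsum : ((2 : ℤ) - (b : ℤ) - (m : ℤ)) * (∑ j : Fin m, (l j : ℤ)) +
        (∑ j : Fin m, (Nat.choose (l j) 2 : ℤ)) + (E : ℤ) = 0 := by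
      rw [hE, Finset.mul_sum]
      push_cast
      rw [← Finset.sum_add_distrib, ← Finset.sum_add_distrib]
      refine Finset.sum_eq_zero fun j _ => ?_
      have hcast : ((b + m - 1 - l j : ℕ) : ℤ) = (b : ℤ) + m - 1 - l j := by
        have := hlb j
        omega
      rw [hcast]
      linear_combination CV.int_choose_two (l j)
    linarith
  -- zpow to pow
  have hZdiv : q ^ ((Nat.choose (b + m) 3 : ℤ) +
        (2 - (b : ℤ) - (m : ℤ)) * (∑ j : Fin m, (l j : ℤ)) +
        ∑ j : Fin m, (Nat.choose (l j) 2 : ℤ)) * q ^ E = q ^ Nat.choose (b + m) 3 := by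
    have := zpow_add₀ hq0 ((Nat.choose (b + m) 3 : ℤ) +
        (2 - (b : ℤ) - (m : ℤ)) * (∑ j : Fin m, (l j : ℤ)) +
        ∑ j : Fin m, (Nat.choose (l j) 2 : ℤ)) (E : ℤ)
    rw [hZE] at this
    rw [← zpow_natCast q E, ← this, zpow_natCast]
  -- rewrite both pair products
  rw [CV.pair_prod_eq q lhat hlhat, CV.pair_prod_eq q l hl, ← hS, ← hT]
  -- final algebra
  refine mul_right_cancel₀ (mul_ne_zero (mul_ne_zero hs2 hqE) hDen0) ?_
  rw [hkey]
  have hsq : (-1 : K) ^ ((b + m - 1) * m) * (-1) ^ ((b + m - 1) * m) = 1 := by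
    rw [← pow_add]
    exact Even.neg_one_pow ⟨(b + m - 1) * m, rfl⟩
  have hsn : ((-1 : K) ^ ((b + m).choose 2)) =
      (-1) ^ (b.choose 2 + m.choose 2) * (-1) ^ ((b + m - 1) * m) := by
    rw [← CV.sign_eq b m, mul_assoc, hsq, mul_one]
  rw [hsn]
  field_simp
  linear_combination (-(∏ j ∈ Finset.range (b + m), qPoch q q j) * CV.Dn q S) * hZdiv -
    (CV.Dn q S * q ^ ((Nat.choose (b + m) 3 : ℤ) +
          (2 - (b : ℤ) - (m : ℤ)) * (∑ j : Fin m, (l j : ℤ)) +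
          ∑ j : Fin m, (Nat.choose (l j) 2 : ℤ)) * q ^ E) * hPQ
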